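/- The set Y = {y ∈ ℝ : there exist c ∈ C#, k ∈ ℤ and ε ∈ {1,−1} with y − ε·φ^{3k}·c ∈ 2ℤ[φ]} is dense in ℝ and has Hausdorff dimension log 3 / log(φ³). -/

import Mathlib

open Set

noncomputable section

/-- The golden ratio `(1+√5)/2`. -/
def gold : ℝ := (1 + Real.sqrt 5) / 2

/-- The ring `ℤ[φ]`. -/
def Zgold : Set ℝ := {x | ∃ m n : ℤ, x = m + n * gold}

/-- The set `2ℤ[φ]`. -/
def twoZgold : Set ℝ := {x | ∃ m n : ℤ, x = 2 * m + 2 * n * gold}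

/-- The Cantor set `C`: sums `Σ a_k φ^(-3k)` with digits `a_k ∈ {0, 4-2φ, 2φ-2}`. -/
def cantorC : Set ℝ :=
  {x | ∃ a : ℕ → ℝ, (∀ k, a k = 0 ∨ a k = 4 - 2 * gold ∨ a k = 2 * gold - 2) ∧
    x = ∑' k : ℕ, a k * (gold ^ (3 * k))⁻¹}

/-- The endpoints of the connected components of `ℝ ∖ C`. -/
def cantorEndpoints : Set ℝ :=
  {x | ∃ y : ℝ, y ∉ cantorC ∧ x ∈ closure (connectedComponentIn cantorCᶜ y)}

/-- `C♯`: the Cantor set minus the endpoints of complementary components. -/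
def cantorCsharp : Set ℝ := cantorC \ cantorEndpoints

namespace GC

lemma sqrt5_sq : Real.sqrt 5 ^ 2 = 5 := Real.sq_sqrt (by norm_num)

lemma sqrt5_gt : (2.23 : ℝ) < Real.sqrt 5 := by
  nlinarith [sqrt5_sq, Real.sqrt_nonneg 5]

lemma sqrt5_lt : Real.sqrt 5 < 2.24 := by
  nlinarith [sqrt5_sq, Real.sqrt_nonneg 5]

lemma gold_gt : (1.6 : ℝ) < gold := by unfold gold; nlinarith [sqrt5_gt]
lemma gold_lt : gold < 1.62 := by unfold gold; nlinarith [sqrt5_lt]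
lemma gold_pos : (0:ℝ) < gold := by nlinarith [gold_gt]
lemma gold_nonneg : (0:ℝ) ≤ gold := gold_pos.le
lemma gold_sq : gold ^ 2 = gold + 1 := by
  unfold gold; field_simp; nlinarith [sqrt5_sq]

/-- the contraction ratio φ⁻³ -/
def ρ : ℝ := (gold ^ 3)⁻¹

lemma b_gt : (4.2 : ℝ) < gold ^ 3 := by nlinarith [gold_gt, gold_sq, gold_lt]
lemma b_lt : gold ^ 3 < 4.3 := by nlinarith [gold_lt, gold_sq, gold_gt]
lemma b_pos : (0:ℝ) < gold ^ 3 := pow_pos gold_pos 3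
lemma ρ_pos : (0:ℝ) < ρ := by unfold ρ; exact inv_pos.2 b_pos
lemma ρ_lt_one : ρ < 1 := by
  unfold ρ; rw [inv_lt_one_iff₀]; right; nlinarith [b_gt]
lemma ρ_nonneg : (0:ℝ) ≤ ρ := ρ_pos.le

/-- digits -/
def dig : Fin 3 → ℝ := ![0, 4 - 2 * gold, 2 * gold - 2]

lemma dig_nonneg (i : Fin 3) : 0 ≤ dig i := by
  have h1 := gold_gt; have h2 := gold_lt
  fin_cases i <;> simp [dig] <;> nlinarith

lemma dig_le (i : Fin 3) : dig i ≤ 2 * gold - 2 := by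
  have h1 := gold_gt; have h2 := gold_lt
  fin_cases i <;> simp [dig] <;> nlinarith

lemma dig_term_nonneg (i : Fin 3) (k : ℕ) : 0 ≤ dig i * ρ ^ k :=
  mul_nonneg (dig_nonneg i) (pow_nonneg ρ_nonneg k)

lemma dig_gap {i j : Fin 3} (h : i ≠ j) : 4 * gold - 6 ≤ |dig i - dig j| := by
  have h1 := gold_gt; have h2 := gold_lt
  have key : ∀ x y : ℝ, 4 * gold - 6 ≤ y - x → 4 * gold - 6 ≤ |x - y| := by
    intro x y hxy
    rw [abs_sub_comm, abs_of_nonneg (by nlinarith)]; exact hxy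
  have key' : ∀ x y : ℝ, 4 * gold - 6 ≤ x - y → 4 * gold - 6 ≤ |x - y| := by
    intro x y hxy
    rw [abs_of_nonneg (by nlinarith)]; exact hxy
  fin_cases i <;> fin_cases j <;> simp_all [dig] <;>
    first
      | (apply key; nlinarith)
      | (apply key' ; nlinarith)

/-- the coding map -/
def F (w : ℕ → Fin 3) : ℝ := ∑' k, dig (w k) * ρ ^ k

lemma summable_geom : Summable (fun k : ℕ => ρ ^ k) :=
  summable_geometric_of_lt_one ρ_nonneg ρ_lt_one

lemma summable_F (w : ℕ → Fin 3) : Summable (fun k => dig (w k) * ρ ^ k) := by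
  apply Summable.of_nonneg_of_le (fun k => dig_term_nonneg _ k)
    (fun k => ?_) (summable_geom.mul_left (2 * gold - 2))
  exact mul_le_mul_of_nonneg_right (dig_le _) (pow_nonneg ρ_nonneg k)

lemma tsum_geom : ∑' k : ℕ, ρ ^ k = (1 - ρ)⁻¹ :=
  tsum_geometric_of_lt_one ρ_nonneg ρ_lt_one

lemma geom_tail (n : ℕ) : ∑' k : ℕ, ρ ^ (k + n) = ρ ^ n * (1 - ρ)⁻¹ := by
  simp only [pow_add]
  rw [tsum_mul_right, tsum_geom, mul_comm]

/-- generic tail bound -/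
lemma tsum_le_of_le_geom {f : ℕ → ℝ} {c : ℝ} (hc : 0 ≤ c)
    (h0 : ∀ k, 0 ≤ f k) (h1 : ∀ k, f k ≤ c * ρ ^ k) :
    ∑' k, f k ≤ c * (1 - ρ)⁻¹ := by
  have hs : Summable f := by
    apply Summable.of_nonneg_of_le h0 h1 (summable_geom.mul_left c)
  calc ∑' k, f k ≤ ∑' k, c * ρ ^ k := Summable.tsum_le_tsum h1 hs (summable_geom.mul_left c)
  _ = c * (1 - ρ)⁻¹ := by rw [tsum_mul_left, tsum_geom]

lemma key_id : (2 * gold - 2) * (1 - ρ)⁻¹ = gold := by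
  have hb := b_gt
  have h : (1 - ρ) = (gold ^ 3 - 1) / gold ^ 3 := by
    unfold ρ; field_simp; rw [one_sub_div (ne_of_gt (by linarith))]
  rw [h, inv_div, ← mul_div_assoc, div_eq_iff (by nlinarith)]
  linear_combination (gold ^ 2 - gold) * gold_sq

lemma F_nonneg (w : ℕ → Fin 3) : 0 ≤ F w :=
  tsum_nonneg fun k => dig_term_nonneg _ k

lemma F_le (w : ℕ → Fin 3) : F w ≤ gold := by
  have := tsum_le_of_le_geom (f := fun k => dig (w k) * ρ ^ k) (c := 2 * gold - 2) (by nlinarith [gold_gt])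
    (fun k => dig_term_nonneg _ k)
    (fun k => mul_le_mul_of_nonneg_right (dig_le _) (pow_nonneg ρ_nonneg k))
  rw [key_id] at this; exact this

end GC

namespace GC2
open GC

lemma gold_rho : gold * ρ = 2 - gold := by
  unfold ρ
  rw [mul_inv_eq_iff_eq_mul₀ (by nlinarith [b_pos])]
  linear_combination (gold ^ 2 - gold) * GC.gold_sq

lemma tail_bound (w v : ℕ → Fin 3) (n : ℕ) :
    |∑' k, ((dig (w (k + n)) - dig (v (k + n))) * ρ ^ (k + n))| ≤ gold * ρ ^ n := by
  have h1 : ∀ k, ‖(dig (w (k + n)) - dig (v (k + n))) * ρ ^ (k + n)‖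
      ≤ ((2 * gold - 2) * ρ ^ n) * ρ ^ k := by
    intro k
    rw [Real.norm_eq_abs, abs_mul, abs_of_nonneg (pow_nonneg ρ_nonneg _), pow_add]
    have hd : |dig (w (k + n)) - dig (v (k + n))| ≤ 2 * gold - 2 := by
      rw [abs_sub_le_iff]
      constructor <;> nlinarith [dig_nonneg (w (k+n)), dig_nonneg (v (k+n)),
        dig_le (w (k+n)), dig_le (v (k+n))]
    calc |dig (w (k + n)) - dig (v (k + n))| * (ρ ^ k * ρ ^ n)
        ≤ (2 * gold - 2) * (ρ ^ k * ρ ^ n) := by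
          apply mul_le_mul_of_nonneg_right hd
          exact mul_nonneg (pow_nonneg ρ_nonneg k) (pow_nonneg ρ_nonneg n)
      _ = ((2 * gold - 2) * ρ ^ n) * ρ ^ k := by ring
  have hsum : Summable (fun k => ‖(dig (w (k + n)) - dig (v (k + n))) * ρ ^ (k + n)‖) := by
    apply Summable.of_nonneg_of_le (fun k => norm_nonneg _) h1
      (summable_geom.mul_left _)
  calc |∑' k, ((dig (w (k + n)) - dig (v (k + n))) * ρ ^ (k + n))|
      ≤ ∑' k, ‖(dig (w (k + n)) - dig (v (k + n))) * ρ ^ (k + n)‖ :=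
        norm_tsum_le_tsum_norm hsum
    _ ≤ ((2 * gold - 2) * ρ ^ n) * (1 - ρ)⁻¹ := by
        apply tsum_le_of_le_geom
          (mul_nonneg (by nlinarith [gold_gt]) (pow_nonneg ρ_nonneg n))
          (fun k => norm_nonneg _) h1
    _ = gold * ρ ^ n := by
        calc ((2 * gold - 2) * ρ ^ n) * (1 - ρ)⁻¹
            = ((2 * gold - 2) * (1 - ρ)⁻¹) * ρ ^ n := by ring
          _ = gold * ρ ^ n := by rw [key_id]

/-- difference of two codings as a shifted series -/
lemma F_sub_eq (w v : ℕ → Fin 3) (n : ℕ) (hlt : ∀ k < n, w k = v k) :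
    F w - F v = ∑' k, ((dig (w (k + n)) - dig (v (k + n))) * ρ ^ (k + n)) := by
  have hsub : Summable (fun k => (dig (w k) - dig (v k)) * ρ ^ k) := by
    have := (summable_F w).sub (summable_F v)
    simpa [sub_mul] using this
  have h1 : F w - F v = ∑' k, ((dig (w k) - dig (v k)) * ρ ^ k) := by
    unfold F
    rw [← Summable.tsum_sub (summable_F w) (summable_F v)]
    congr 1; funext k; ring
  rw [h1]
  rw [← Summable.sum_add_tsum_nat_add n hsub]
  have hz : ∑ k ∈ Finset.range n, (dig (w k) - dig (v k)) * ρ ^ k = 0 := by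
    apply Finset.sum_eq_zero
    intro k hk
    rw [hlt k (Finset.mem_range.1 hk)]; ring
  rw [hz, zero_add]

lemma sep {w v : ℕ → Fin 3} {n : ℕ} (hlt : ∀ k < n, w k = v k) (hne : w n ≠ v n) :
    (5 * gold - 8) * ρ ^ n ≤ |F w - F v| := by
  have hlt' : ∀ k < n + 1, k ≠ n → w k = v k := fun k hk hkn =>
    hlt k (by omega)
  have h1 : F w - F v = ∑' k, ((dig (w (k + n)) - dig (v (k + n))) * ρ ^ (k + n)) :=
    F_sub_eq w v n hlt
  -- split off the first term
  have hsub : Summable (fun k => (dig (w (k + n)) - dig (v (k + n))) * ρ ^ (k + n)) := by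
    have := ((summable_F w).sub (summable_F v)).comp_injective (add_left_injective n)
    simpa [sub_mul, Function.comp_def] using this
  have h2 : F w - F v = (dig (w n) - dig (v n)) * ρ ^ n
      + ∑' k, ((dig (w (k + 1 + n)) - dig (v (k + 1 + n))) * ρ ^ (k + 1 + n)) := by
    rw [h1, ← Summable.sum_add_tsum_nat_add 1 hsub]
    simp [Finset.sum_range_one]
  have htail := tail_bound w v (n + 1)
  have htail' : |∑' k, ((dig (w (k + 1 + n)) - dig (v (k + 1 + n))) * ρ ^ (k + 1 + n))|
      ≤ gold * ρ ^ (n + 1) := by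
    have : (fun k => (dig (w (k + 1 + n)) - dig (v (k + 1 + n))) * ρ ^ (k + 1 + n))
        = (fun k => (dig (w (k + (n + 1))) - dig (v (k + (n + 1)))) * ρ ^ (k + (n + 1))) := by
      funext k; ring_nf
    rw [this]; exact htail
  have hlead : (4 * gold - 6) * ρ ^ n ≤ |(dig (w n) - dig (v n)) * ρ ^ n| := by
    rw [abs_mul, abs_of_nonneg (pow_nonneg ρ_nonneg _)]
    exact mul_le_mul_of_nonneg_right (dig_gap hne) (pow_nonneg ρ_nonneg _)
  have key : |(dig (w n) - dig (v n)) * ρ ^ n|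
      ≤ |F w - F v| + |∑' k, ((dig (w (k + 1 + n)) - dig (v (k + 1 + n))) * ρ ^ (k + 1 + n))| := by
    rw [h2]
    have := abs_add_le ((dig (w n) - dig (v n)) * ρ ^ n
      + ∑' k, ((dig (w (k + 1 + n)) - dig (v (k + 1 + n))) * ρ ^ (k + 1 + n)))
      (-(∑' k, ((dig (w (k + 1 + n)) - dig (v (k + 1 + n))) * ρ ^ (k + 1 + n))))
    simpa using this
  have hgr : gold * ρ ^ (n + 1) = (2 - gold) * ρ ^ n := by
    rw [pow_succ]
    calc gold * (ρ ^ n * ρ) = (gold * ρ) * ρ ^ n := by ring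
      _ = (2 - gold) * ρ ^ n := by rw [gold_rho]
  nlinarith [hlead, key, htail', hgr]

lemma c_sep_pos : (0:ℝ) < 5 * gold - 8 := by nlinarith [gold_gt]

lemma F_inj : Function.Injective F := by
  classical
  intro w v h
  by_contra hne
  have hex : ∃ k, w k ≠ v k := by
    by_contra hh; push_neg at hh; exact hne (funext hh)
  set n := Nat.find hex with hn
  have h1 : w n ≠ v n := Nat.find_spec hex
  have h2 : ∀ k < n, w k = v k := fun k hk => by
    by_contra hc
    have := Nat.find_min' hex hc
    omega
  have := sep h2 h1
  rw [h, sub_self, abs_zero] at this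
  nlinarith [c_sep_pos, pow_pos ρ_pos n]

lemma pow_inv_eq (k : ℕ) : (gold ^ (3 * k))⁻¹ = ρ ^ k := by
  unfold ρ
  rw [pow_mul, inv_pow]

lemma dig_cases (i : Fin 3) :
    dig i = 0 ∨ dig i = 4 - 2 * gold ∨ dig i = 2 * gold - 2 := by
  fin_cases i <;> simp [dig]

lemma cantorC_eq : cantorC = Set.range F := by
  classical
  ext x
  unfold cantorC
  simp only [mem_setOf_eq, Set.mem_range]
  constructor
  · rintro ⟨a, ha, rfl⟩
    refine ⟨fun k => if a k = 0 then 0 else if a k = 4 - 2 * gold then 1 else 2, ?_⟩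
    unfold F
    apply tsum_congr
    intro k
    rw [pow_inv_eq]
    congr 1
    rcases ha k with h | h | h
    · simp [h, dig]
    · have h0 : (4:ℝ) - 2 * gold ≠ 0 := by nlinarith [gold_lt]
      simp only [h, if_neg h0, if_pos rfl]
      simp [dig]
    · have h0 : (2:ℝ) * gold - 2 ≠ 0 := by nlinarith [gold_gt]
      have h1 : (2:ℝ) * gold - 2 ≠ 4 - 2 * gold := by intro hc; nlinarith [gold_gt]
      simp only [h, if_neg h0, if_neg h1]
      simp [dig]
  · rintro ⟨w, rfl⟩
    refine ⟨fun k => dig (w k), fun k => dig_cases (w k), ?_⟩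
    unfold F
    apply tsum_congr
    intro k
    rw [pow_inv_eq]

lemma F_update (w : ℕ → Fin 3) (n : ℕ) (a : Fin 3) :
    F (Function.update w n a) = F w + (dig a - dig (w n)) * ρ ^ n := by
  have h : F (Function.update w n a) - F w
      = ∑' k, (dig (Function.update w n a k) * ρ ^ k - dig (w k) * ρ ^ k) := by
    unfold F
    rw [← Summable.tsum_sub (summable_F _) (summable_F w)]
  have h2 : ∑' k, (dig (Function.update w n a k) * ρ ^ k - dig (w k) * ρ ^ k)
      = (dig a - dig (w n)) * ρ ^ n := by
    rw [tsum_eq_single n]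
    · rw [Function.update_self]; ring
    · intro k hk
      rw [Function.update_of_ne hk]; ring
  have := h.trans h2
  linarith

end GC2

namespace GC3
open GC GC2

lemma tsum_le_geom' {r c : ℝ} (hr0 : 0 ≤ r) (hr1 : r < 1) {f : ℕ → ℝ}
    (h0 : ∀ k, 0 ≤ f k) (h1 : ∀ k, f k ≤ c * r ^ k) :
    ∑' k, f k ≤ c * (1 - r)⁻¹ := by
  have hgeom : Summable (fun k : ℕ => r ^ k) := summable_geometric_of_lt_one hr0 hr1
  have hs : Summable f := Summable.of_nonneg_of_le h0 h1 (hgeom.mul_left c)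
  calc ∑' k, f k ≤ ∑' k, c * r ^ k := Summable.tsum_le_tsum h1 hs (hgeom.mul_left c)
  _ = c * (1 - r)⁻¹ := by rw [tsum_mul_left, tsum_geometric_of_lt_one hr0 hr1]

/-- generic: difference of two series that agree below `n` -/
lemma tsum_sub_shift {g1 g2 : ℕ → ℝ} (hs1 : Summable g1) (hs2 : Summable g2)
    (n : ℕ) (hagree : ∀ k < n, g1 k = g2 k) :
    (∑' k, g1 k) - ∑' k, g2 k = ∑' k, (g1 (k + n) - g2 (k + n)) := by
  have hsub : Summable (fun k => g1 k - g2 k) := hs1.sub hs2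
  rw [← Summable.tsum_sub hs1 hs2, ← Summable.sum_add_tsum_nat_add n hsub]
  have hz : ∑ k ∈ Finset.range n, (g1 k - g2 k) = 0 :=
    Finset.sum_eq_zero fun k hk => by rw [hagree k (Finset.mem_range.1 hk)]; ring
  rw [hz, zero_add]

def H (w : ℕ → Fin 3) : ℝ := ∑' k, ((w k : ℕ) : ℝ) * (3:ℝ)⁻¹ ^ (k + 1)

lemma H_term_le (w : ℕ → Fin 3) (k : ℕ) :
    ((w k : ℕ) : ℝ) * (3:ℝ)⁻¹ ^ (k + 1) ≤ (2/3) * (3:ℝ)⁻¹ ^ k := by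
  have h2 : ((w k : ℕ) : ℝ) ≤ 2 := by
    have := (w k).2
    have : (w k : ℕ) ≤ 2 := by omega
    exact_mod_cast this
  have : (3:ℝ)⁻¹ ^ (k+1) = (3:ℝ)⁻¹ * (3:ℝ)⁻¹ ^ k := by ring
  rw [this]
  have h3 : (0:ℝ) ≤ (3:ℝ)⁻¹ ^ k := by positivity
  nlinarith

lemma H_term_nonneg (w : ℕ → Fin 3) (k : ℕ) :
    0 ≤ ((w k : ℕ) : ℝ) * (3:ℝ)⁻¹ ^ (k + 1) := by positivity

lemma summable_H (w : ℕ → Fin 3) :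
    Summable (fun k => ((w k : ℕ) : ℝ) * (3:ℝ)⁻¹ ^ (k + 1)) := by
  apply Summable.of_nonneg_of_le (H_term_nonneg w) (H_term_le w)
  exact (summable_geometric_of_lt_one (by norm_num) (by norm_num)).mul_left _

lemma H_nonneg (w : ℕ → Fin 3) : 0 ≤ H w := tsum_nonneg (H_term_nonneg w)

lemma H_le_one (w : ℕ → Fin 3) : H w ≤ 1 := by
  have := tsum_le_geom' (c := 2/3) (by norm_num) (by norm_num)
    (H_term_nonneg w) (H_term_le w)
  unfold H
  calc ∑' k, ((w k : ℕ) : ℝ) * (3:ℝ)⁻¹ ^ (k + 1) ≤ (2/3) * (1 - 3⁻¹)⁻¹ := this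
  _ = 1 := by norm_num

lemma H_diff {w v : ℕ → Fin 3} (n : ℕ) (hagree : ∀ k < n, w k = v k) :
    |H w - H v| ≤ (3:ℝ)⁻¹ ^ n := by
  have h1 : H w - H v
      = ∑' k, (((w (k+n) : ℕ) : ℝ) * (3:ℝ)⁻¹ ^ (k + n + 1)
          - ((v (k+n) : ℕ) : ℝ) * (3:ℝ)⁻¹ ^ (k + n + 1)) := by
    unfold H
    exact tsum_sub_shift (summable_H w) (summable_H v) n
      (fun k hk => by rw [hagree k hk])
  rw [h1]
  have hb : ∀ k : ℕ, ‖((w (k+n) : ℕ) : ℝ) * (3:ℝ)⁻¹ ^ (k + n + 1)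
      - ((v (k+n) : ℕ) : ℝ) * (3:ℝ)⁻¹ ^ (k + n + 1)‖
      ≤ ((2/3) * (3:ℝ)⁻¹ ^ n) * (3:ℝ)⁻¹ ^ k := by
    intro k
    rw [Real.norm_eq_abs, ← sub_mul, abs_mul,
      abs_of_nonneg (show (0:ℝ) ≤ (3:ℝ)⁻¹ ^ (k + n + 1) by positivity)]
    have hwv : |((w (k+n) : ℕ) : ℝ) - ((v (k+n) : ℕ) : ℝ)| ≤ 2 := by
      have hw : ((w (k+n)) : ℕ) ≤ 2 := by have := (w (k+n)).2; omega
      have hv : ((v (k+n)) : ℕ) ≤ 2 := by have := (v (k+n)).2; omega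
      rw [abs_sub_le_iff]
      constructor <;>
        [skip; skip] <;>
        · have hw' : ((w (k+n) : ℕ) : ℝ) ≤ 2 := by exact_mod_cast hw
          have hv' : ((v (k+n) : ℕ) : ℝ) ≤ 2 := by exact_mod_cast hv
          have hw0 : (0:ℝ) ≤ ((w (k+n) : ℕ) : ℝ) := Nat.cast_nonneg _
          have hv0 : (0:ℝ) ≤ ((v (k+n) : ℕ) : ℝ) := Nat.cast_nonneg _
          linarith
    have hpow : (3:ℝ)⁻¹ ^ (k + n + 1) = (3:ℝ)⁻¹ * ((3:ℝ)⁻¹ ^ n * (3:ℝ)⁻¹ ^ k) := by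
      rw [← pow_add]; ring_nf
    have h3 : (0:ℝ) ≤ (3:ℝ)⁻¹ ^ n * (3:ℝ)⁻¹ ^ k := by positivity
    calc |((w (k+n) : ℕ) : ℝ) - ((v (k+n) : ℕ) : ℝ)| * (3:ℝ)⁻¹ ^ (k + n + 1)
        ≤ 2 * (3:ℝ)⁻¹ ^ (k + n + 1) := by
          apply mul_le_mul_of_nonneg_right hwv (by positivity)
      _ = ((2/3) * (3:ℝ)⁻¹ ^ n) * (3:ℝ)⁻¹ ^ k := by rw [hpow]; ring
  have hsum : Summable (fun k => ‖((w (k+n) : ℕ) : ℝ) * (3:ℝ)⁻¹ ^ (k + n + 1)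
      - ((v (k+n) : ℕ) : ℝ) * (3:ℝ)⁻¹ ^ (k + n + 1)‖) := by
    apply Summable.of_nonneg_of_le (fun k => norm_nonneg _) hb
    exact (summable_geometric_of_lt_one (by norm_num) (by norm_num)).mul_left _
  calc |∑' k, (((w (k+n) : ℕ) : ℝ) * (3:ℝ)⁻¹ ^ (k + n + 1)
        - ((v (k+n) : ℕ) : ℝ) * (3:ℝ)⁻¹ ^ (k + n + 1))|
      ≤ ∑' k, ‖((w (k+n) : ℕ) : ℝ) * (3:ℝ)⁻¹ ^ (k + n + 1)
        - ((v (k+n) : ℕ) : ℝ) * (3:ℝ)⁻¹ ^ (k + n + 1)‖ := norm_tsum_le_tsum_norm hsum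
    _ ≤ ((2/3) * (3:ℝ)⁻¹ ^ n) * (1 - 3⁻¹)⁻¹ :=
        tsum_le_geom' (by norm_num) (by norm_num) (fun k => norm_nonneg _) hb
    _ = (3:ℝ)⁻¹ ^ n := by ring_nf

lemma H_two : H (fun _ => 2) = 1 := by
  unfold H
  have : (fun k : ℕ => (((2 : Fin 3) : ℕ) : ℝ) * (3:ℝ)⁻¹ ^ (k + 1))
      = fun k : ℕ => (2/3) * (3:ℝ)⁻¹ ^ k := by
    funext k
    show ((2:ℕ):ℝ) * (3:ℝ)⁻¹ ^ (k+1) = _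
    push_cast
    ring
  rw [this, tsum_mul_left, tsum_geometric_of_lt_one (by norm_num) (by norm_num)]
  norm_num

lemma H_surj {t : ℝ} (h0 : 0 ≤ t) (h1 : t ≤ 1) : ∃ w, H w = t := by
  rcases eq_or_lt_of_le h1 with rfl | h1
  · exact ⟨fun _ => 2, H_two⟩
  set E : ℕ → ℤ := fun n => ⌊(3:ℝ) ^ n * t⌋ with hE
  have hEbound : ∀ n, 0 ≤ E (n+1) - 3 * E n ∧ E (n+1) - 3 * E n < 3 := by
    intro n
    have hfl : (E n : ℝ) ≤ (3:ℝ)^n * t := Int.floor_le _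
    have hfu : (3:ℝ)^n * t < (E n : ℝ) + 1 := Int.lt_floor_add_one _
    have e1 : (3:ℤ) * E n ≤ E (n+1) := by
      apply Int.le_floor.2
      push_cast
      calc ((3:ℝ) * (E n : ℝ)) ≤ 3 * ((3:ℝ)^n * t) := by nlinarith
        _ = (3:ℝ)^(n+1) * t := by ring
    have e2 : E (n+1) < 3 * E n + 3 := by
      apply Int.floor_lt.2
      push_cast
      calc (3:ℝ)^(n+1) * t = 3 * ((3:ℝ)^n * t) := by ring
        _ < 3 * (E n : ℝ) + 3 := by nlinarith
    omega
  set w : ℕ → Fin 3 := fun n => ⟨(E (n+1) - 3 * E n).toNat, by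
    have := hEbound n; omega⟩ with hw
  have hwcast : ∀ n, ((w n : ℕ) : ℝ) = ((E (n+1) : ℤ) : ℝ) - 3 * ((E n : ℤ) : ℝ) := by
    intro n
    have h := hEbound n
    have : ((w n : ℕ) : ℤ) = E (n+1) - 3 * E n := by
      simp only [hw]
      omega
    have := congrArg (fun z : ℤ => (z : ℝ)) this
    push_cast at this
    push_cast
    linarith [this]
  have hE0 : E 0 = 0 := by
    rw [hE]
    simp only [pow_zero, one_mul]
    exact Int.floor_eq_zero_iff.2 ⟨h0, h1⟩
  have key : ∀ n, ∑ k ∈ Finset.range n, ((w k : ℕ):ℝ) * (3:ℝ)⁻¹^(k+1)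
      = (E n : ℝ) / 3 ^ n := by
    intro n
    induction n with
    | zero => simp [hE0]
    | succ n ih =>
      rw [Finset.sum_range_succ, ih, hwcast n]
      have h3 : (3:ℝ) ^ n ≠ 0 := by positivity
      have h3' : (3:ℝ) ^ (n+1) ≠ 0 := by positivity
      rw [inv_pow]
      field_simp
      ring
  have hdist : ∀ n, |(E n : ℝ) / 3 ^ n - t| ≤ (3:ℝ)⁻¹ ^ n := by
    intro n
    have hfl : (E n : ℝ) ≤ (3:ℝ)^n * t := Int.floor_le _
    have hfu : (3:ℝ)^n * t < (E n : ℝ) + 1 := Int.lt_floor_add_one _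
    have h3 : (0:ℝ) < (3:ℝ) ^ n := by positivity
    have hx : (E n : ℝ)/3^n - t = ((E n : ℝ) - 3^n * t)/3^n := by field_simp
    have hip : (3:ℝ)⁻¹ ^ n = 1 / 3^n := by rw [inv_pow, one_div]
    rw [abs_le, hx, hip]
    constructor
    · rw [neg_div' , div_le_div_iff_of_pos_right h3]
      linarith
    · rw [div_le_div_iff_of_pos_right h3]
      linarith
  have hkeyfun : (fun n => ∑ k ∈ Finset.range n, ((w k : ℕ):ℝ) * (3:ℝ)⁻¹^(k+1))
      = fun n => (E n : ℝ) / 3 ^ n := funext key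
  have hs := (summable_H w).hasSum.tendsto_sum_nat
  rw [hkeyfun] at hs
  have ht : Filter.Tendsto (fun n => (E n : ℝ) / 3 ^ n) Filter.atTop (nhds t) := by
    rw [tendsto_iff_dist_tendsto_zero]
    have hd2 : ∀ n, dist ((E n : ℝ)/3^n) t ≤ (3:ℝ)⁻¹ ^ n := fun n => by
      rw [Real.dist_eq]; exact hdist n
    exact squeeze_zero (fun n => dist_nonneg) hd2
      (tendsto_pow_atTop_nhds_zero_of_lt_one (by norm_num) (by norm_num))
  exact ⟨w, tendsto_nhds_unique hs ht⟩

end GC3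

namespace GC4
open GC GC2 GC3
open Classical in
noncomputable def digits (x : ℝ) : ℕ → Fin 3 :=
  if h : ∃ w, F w = x then h.choose else fun _ => 0

lemma F_digits {x : ℝ} (hx : x ∈ cantorC) : F (digits x) = x := by
  rw [cantorC_eq] at hx
  obtain ⟨w, hw⟩ := hx
  unfold digits
  rw [dif_pos ⟨w, hw⟩]
  exact (⟨w, hw⟩ : ∃ w, F w = x).choose_spec

lemma digits_F (w : ℕ → Fin 3) : digits (F w) = w :=
  F_inj (F_digits (by rw [cantorC_eq]; exact ⟨w, rfl⟩))

noncomputable def G (x : ℝ) : ℝ := H (digits x)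

/-- the dimension -/
def s : ℝ := Real.log 3 / Real.log (gold ^ 3)

lemma log_b_pos : 0 < Real.log (gold ^ 3) :=
  Real.log_pos (by nlinarith [b_gt])

lemma s_pos : 0 < s := div_pos (Real.log_pos (by norm_num)) log_b_pos

lemma s_nonneg : 0 ≤ s := s_pos.le

lemma b_rpow_s : (gold ^ 3) ^ s = (3:ℝ) := by
  rw [Real.rpow_def_of_pos b_pos]
  unfold s
  rw [mul_comm, div_mul_cancel₀ _ log_b_pos.ne']
  exact Real.exp_log (by norm_num)

lemma rho_rpow_s : ρ ^ s = (3:ℝ)⁻¹ := by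
  unfold ρ
  rw [Real.inv_rpow b_pos.le, b_rpow_s]

lemma rho_pow_rpow (n : ℕ) : (ρ ^ n) ^ s = (3:ℝ)⁻¹ ^ n := by
  rw [← Real.rpow_natCast ρ n, ← Real.rpow_mul ρ_nonneg, mul_comm,
    Real.rpow_mul ρ_nonneg, rho_rpow_s, Real.rpow_natCast]

/-- Hölder constant -/
def Kc : ℝ := (5 * gold - 8) ^ (-s)

lemma Kc_pos : 0 < Kc := Real.rpow_pos_of_pos c_sep_pos _

lemma G_holder {x y : ℝ} (hx : x ∈ cantorC) (hy : y ∈ cantorC) :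
    |G x - G y| ≤ Kc * |x - y| ^ s := by
  classical
  by_cases hxy : digits x = digits y
  · have : x = y := by
      rw [← F_digits hx, ← F_digits hy, hxy]
    rw [this]
    simp [Real.zero_rpow s_pos.ne', Kc_pos.le]
  · have hex : ∃ k, digits x k ≠ digits y k := by
      by_contra hh; push_neg at hh; exact hxy (funext hh)
    set n := Nat.find hex with hn
    have h1 : digits x n ≠ digits y n := Nat.find_spec hex
    have h2 : ∀ k < n, digits x k = digits y k := fun k hk => by
      by_contra hc
      have := Nat.find_min' hex hc
      omega
    have hH : |G x - G y| ≤ (3:ℝ)⁻¹ ^ n := H_diff n h2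
    have hF : (5 * gold - 8) * ρ ^ n ≤ |x - y| := by
      have := sep h2 h1
      rwa [F_digits hx, F_digits hy] at this
    have hrpow : ((5 * gold - 8) * ρ ^ n) ^ s ≤ |x - y| ^ s :=
      Real.rpow_le_rpow (mul_nonneg c_sep_pos.le (pow_nonneg ρ_nonneg n)) hF s_nonneg
    have hsplit : ((5 * gold - 8) * ρ ^ n) ^ s
        = (5 * gold - 8) ^ s * (3:ℝ)⁻¹ ^ n := by
      rw [Real.mul_rpow c_sep_pos.le (pow_nonneg ρ_nonneg n), rho_pow_rpow]
    have hKc : Kc * (5 * gold - 8) ^ s = 1 := by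
      unfold Kc
      rw [← Real.rpow_add c_sep_pos]
      simp
    calc |G x - G y| ≤ (3:ℝ)⁻¹ ^ n := hH
      _ = Kc * ((5 * gold - 8) ^ s * (3:ℝ)⁻¹ ^ n) := by
          rw [← mul_assoc, hKc, one_mul]
      _ = Kc * ((5 * gold - 8) * ρ ^ n) ^ s := by rw [hsplit]
      _ ≤ Kc * |x - y| ^ s := by
          apply mul_le_mul_of_nonneg_left hrpow Kc_pos.le

lemma G_image : G '' cantorC = Icc 0 1 := by
  apply Subset.antisymm
  · rintro t ⟨x, hx, rfl⟩
    exact ⟨H_nonneg _, H_le_one _⟩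
  · rintro t ⟨h0, h1⟩
    obtain ⟨w, hw⟩ := H_surj h0 h1
    refine ⟨F w, by rw [cantorC_eq]; exact ⟨w, rfl⟩, ?_⟩
    unfold G
    rw [digits_F, hw]

end GC4

namespace GC5
open GC GC2 GC3 GC4

lemma closure_endpoint {U : Set ℝ} (hU : U.OrdConnected) {x : ℝ}
    (hx : x ∈ closure U) (hxU : x ∉ U) (hne : U.Nonempty) :
    x = sInf U ∨ x = sSup U := by
  by_cases hlow : ∃ u ∈ U, u < x
  · by_cases hhigh : ∃ v ∈ U, x < v
    · obtain ⟨u, hu, hux⟩ := hlow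
      obtain ⟨v, hv, hxv⟩ := hhigh
      exact absurd (hU.out hu hv ⟨hux.le, hxv.le⟩) hxU
    · push_neg at hhigh
      right
      have hub : ∀ v ∈ U, v ≤ x := hhigh
      have hbdd : BddAbove U := ⟨x, hub⟩
      apply le_antisymm
      · have hsub : U ⊆ Iic (sSup U) := fun u hu => le_csSup hbdd hu
        have := closure_mono hsub hx
        rwa [closure_Iic] at this
      · exact csSup_le hne hub
  · push_neg at hlow
    left
    have hlb : ∀ u ∈ U, x ≤ u := hlow
    have hbdd : BddBelow U := ⟨x, hlb⟩
    apply le_antisymm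
    · exact le_csInf hne hlb
    · have hsub : U ⊆ Ici (sInf U) := fun u hu => csInf_le hbdd hu
      have := closure_mono hsub hx
      rwa [closure_Ici] at this

lemma endpoints_countable : (cantorC ∩ cantorEndpoints).Countable := by
  have hsub : cantorC ∩ cantorEndpoints ⊆
      ⋃ q : ℚ, ({sInf (connectedComponentIn cantorCᶜ (q:ℝ)),
        sSup (connectedComponentIn cantorCᶜ (q:ℝ))} : Set ℝ) := by
    rintro x ⟨hxC, y, hy, hcl⟩
    set U := connectedComponentIn cantorCᶜ y with hUdef
    have hyU : y ∈ U := mem_connectedComponentIn hy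
    have hUsub : U ⊆ cantorCᶜ := connectedComponentIn_subset _ _
    have hxU : x ∉ U := fun h => (hUsub h) hxC
    have hord : U.OrdConnected := (isPreconnected_connectedComponentIn).ordConnected
    -- find a second point
    have h2pt : ∃ u ∈ U, u ≠ y := by
      by_contra hh
      push_neg at hh
      have : U ⊆ {y} := fun u hu => hh u hu
      have := closure_mono this hcl
      rw [closure_singleton] at this
      rw [mem_singleton_iff] at this
      exact hy (this ▸ hxC)
    obtain ⟨u, huU, huy⟩ := h2pt
    -- find a rational point in U
    have hq : ∃ q : ℚ, (q : ℝ) ∈ U := by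
      rcases lt_or_gt_of_ne huy with h | h
      · obtain ⟨q, hq1, hq2⟩ := exists_rat_btwn h
        exact ⟨q, hord.out huU hyU ⟨hq1.le, hq2.le⟩⟩
      · obtain ⟨q, hq1, hq2⟩ := exists_rat_btwn h
        exact ⟨q, hord.out hyU huU ⟨hq1.le, hq2.le⟩⟩
    obtain ⟨q, hqU⟩ := hq
    have hcomp : connectedComponentIn cantorCᶜ (q:ℝ) = U := by
      rw [hUdef]
      exact (connectedComponentIn_eq hqU).symm
    have hend := closure_endpoint hord hcl hxU ⟨y, hyU⟩
    apply mem_iUnion.2 ⟨q, ?_⟩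
    rw [hcomp]
    rcases hend with h | h
    · exact mem_insert_iff.2 (Or.inl h)
    · exact mem_insert_iff.2 (Or.inr (mem_singleton_iff.2 h))
  exact (Set.Countable.mono hsub
    (countable_iUnion fun q => (Set.countable_singleton _).insert _))

/-- the base point: all digits equal to 1 -/
def w1 : ℕ → Fin 3 := fun _ => 1

def c0 : ℝ := F w1

lemma c0_mem : c0 ∈ cantorC := by rw [cantorC_eq]; exact ⟨w1, rfl⟩

lemma xval_eq (n : ℕ) : F (Function.update w1 n 0) = c0 - (4 - 2 * gold) * ρ ^ n := by
  rw [F_update]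
  show c0 + (dig 0 - dig (w1 n)) * ρ ^ n = _
  have : dig 0 - dig (w1 n) = -(4 - 2 * gold) := by
    show dig 0 - dig 1 = _
    simp [dig]
  rw [this]; ring

lemma yval_eq (n : ℕ) : F (Function.update w1 n 2) = c0 + (4 * gold - 6) * ρ ^ n := by
  rw [F_update]
  show c0 + (dig 2 - dig (w1 n)) * ρ ^ n = _
  have : dig 2 - dig (w1 n) = 4 * gold - 6 := by
    show dig 2 - dig 1 = _
    simp [dig]; ring
  rw [this]

lemma xval_mem (n : ℕ) : c0 - (4 - 2 * gold) * ρ ^ n ∈ cantorC := by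
  rw [← xval_eq, cantorC_eq]; exact ⟨_, rfl⟩

lemma yval_mem (n : ℕ) : c0 + (4 * gold - 6) * ρ ^ n ∈ cantorC := by
  rw [← yval_eq, cantorC_eq]; exact ⟨_, rfl⟩

lemma gap1_pos : (0:ℝ) < 4 - 2 * gold := by nlinarith [gold_lt]
lemma gap2_pos : (0:ℝ) < 4 * gold - 6 := by nlinarith [gold_gt]

lemma exists_small_pow {ε c : ℝ} (hε : 0 < ε) (hc : 0 < c) : ∃ n : ℕ, c * ρ ^ n < ε := by
  obtain ⟨n, hn⟩ := exists_pow_lt_of_lt_one (div_pos hε hc) ρ_lt_one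
  exact ⟨n, by rwa [← lt_div_iff₀' hc]⟩

lemma c0_not_endpoint : c0 ∉ cantorEndpoints := by
  rintro ⟨y, hy, hcl⟩
  set U := connectedComponentIn cantorCᶜ y with hUdef
  have hyU : y ∈ U := mem_connectedComponentIn hy
  have hUsub : U ⊆ cantorCᶜ := connectedComponentIn_subset _ _
  have hxU : c0 ∉ U := fun h => (hUsub h) c0_mem
  have hord : U.OrdConnected := (isPreconnected_connectedComponentIn).ordConnected
  by_cases hlow : ∃ u ∈ U, u < c0
  · by_cases hhigh : ∃ v ∈ U, c0 < v
    · obtain ⟨u, hu, hux⟩ := hlow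
      obtain ⟨v, hv, hxv⟩ := hhigh
      exact hxU (hord.out hu hv ⟨hux.le, hxv.le⟩)
    · -- all of U is < c0; use left approach points x_val
      push_neg at hhigh
      obtain ⟨u₀, hu₀U, hu₀⟩ := hlow
      obtain ⟨n, hn⟩ := exists_small_pow (show (0:ℝ) < c0 - u₀ by linarith) gap1_pos
      set xv := c0 - (4 - 2 * gold) * ρ ^ n with hxv
      have hxv_lt : xv < c0 := by
        have : 0 < (4 - 2 * gold) * ρ ^ n := mul_pos gap1_pos (pow_pos ρ_pos n)
        rw [hxv]; linarith
      have hxv_gt : u₀ < xv := by rw [hxv]; linarith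
      -- a point of U close to c0 from the left
      have hcl' := Metric.mem_closure_iff.1 hcl (c0 - xv) (by linarith)
      obtain ⟨u', hu'U, hu'd⟩ := hcl'
      have hu'le : u' ≤ c0 := (hhigh u' hu'U)
      have hu'gt : xv < u' := by
        rw [Real.dist_eq, abs_lt] at hu'd
        linarith [hu'd.2]
      have : xv ∈ U := hord.out hu₀U hu'U ⟨hxv_gt.le, hu'gt.le⟩
      exact (hUsub this) (xval_mem n)
  · -- all of U is ≥ c0, in fact > c0 since c0 ∉ U; y > c0
    push_neg at hlow
    have hyge : c0 < y := lt_of_le_of_ne (hlow y hyU) (fun h => hy (h ▸ c0_mem))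
    obtain ⟨n, hn⟩ := exists_small_pow (show (0:ℝ) < y - c0 by linarith) gap2_pos
    set yv := c0 + (4 * gold - 6) * ρ ^ n with hyv
    have hyv_gt : c0 < yv := by
      have : 0 < (4 * gold - 6) * ρ ^ n := mul_pos gap2_pos (pow_pos ρ_pos n)
      rw [hyv]; linarith
    have hyv_lt : yv < y := by rw [hyv]; linarith
    have hcl' := Metric.mem_closure_iff.1 hcl (yv - c0) (by linarith)
    obtain ⟨u', hu'U, hu'd⟩ := hcl'
    have hu'ge : c0 ≤ u' := hlow u' hu'U
    have hu'lt : u' < yv := by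
      rw [Real.dist_eq, abs_lt] at hu'd
      linarith [hu'd.1]
    have : yv ∈ U := hord.out hu'U hyU ⟨hu'lt.le, hyv_lt.le⟩
    exact (hUsub this) (yval_mem n)

lemma c0_sharp : c0 ∈ cantorCsharp := ⟨c0_mem, c0_not_endpoint⟩

end GC5

namespace GC6
open GC GC2 GC3 GC4 GC5 MeasureTheory Filter
open scoped ENNReal NNReal

/-- partial-sum base point of a cylinder -/
def P (n : ℕ) (w : Fin n → Fin 3) : ℝ := ∑ k : Fin n, dig (w k) * ρ ^ (k : ℕ)

lemma cover_step (n : ℕ) :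
    cantorC ⊆ ⋃ w : Fin n → Fin 3, Icc (P n w) (P n w + gold * ρ ^ n) := by
  intro x hx
  rw [cantorC_eq] at hx
  obtain ⟨v, rfl⟩ := hx
  apply mem_iUnion.2 ⟨fun k : Fin n => v k, ?_⟩
  have hsplit : ∑ k ∈ Finset.range n, dig (v k) * ρ ^ k
      + ∑' k, dig (v (k + n)) * ρ ^ (k + n) = F v :=
    Summable.sum_add_tsum_nat_add n (summable_F v)
  have hP : P n (fun k : Fin n => v k) = ∑ k ∈ Finset.range n, dig (v k) * ρ ^ k := by
    unfold P
    exact Fin.sum_univ_eq_sum_range (fun k => dig (v k) * ρ ^ k) n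
  have htail_nonneg : 0 ≤ ∑' k, dig (v (k + n)) * ρ ^ (k + n) :=
    tsum_nonneg fun k => dig_term_nonneg _ _
  have htail_le : ∑' k, dig (v (k + n)) * ρ ^ (k + n) ≤ gold * ρ ^ n := by
    have hb : ∀ k, dig (v (k + n)) * ρ ^ (k + n) ≤ ((2 * gold - 2) * ρ ^ n) * ρ ^ k := by
      intro k
      rw [pow_add]
      calc dig (v (k + n)) * (ρ ^ k * ρ ^ n)
          ≤ (2 * gold - 2) * (ρ ^ k * ρ ^ n) :=
            mul_le_mul_of_nonneg_right (dig_le _)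
              (mul_nonneg (pow_nonneg ρ_nonneg k) (pow_nonneg ρ_nonneg n))
        _ = ((2 * gold - 2) * ρ ^ n) * ρ ^ k := by ring
    calc ∑' k, dig (v (k + n)) * ρ ^ (k + n)
        ≤ ((2 * gold - 2) * ρ ^ n) * (1 - ρ)⁻¹ :=
          tsum_le_of_le_geom
            (mul_nonneg (by nlinarith [gold_gt]) (pow_nonneg ρ_nonneg n))
            (fun k => dig_term_nonneg _ _) hb
      _ = ((2 * gold - 2) * (1 - ρ)⁻¹) * ρ ^ n := by ring
      _ = gold * ρ ^ n := by rw [key_id]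
  constructor
  · rw [hP]; linarith [hsplit, htail_nonneg]
  · rw [hP]; linarith [hsplit, htail_le]

lemma ofReal3_inv : (3 : ℝ≥0∞) * ENNReal.ofReal (3:ℝ)⁻¹ = 1 := by
  rw [show (3 : ℝ≥0∞) = ENNReal.ofReal (3:ℝ) by simp]
  rw [← ENNReal.ofReal_mul (by norm_num)]
  norm_num

lemma sum_cover (n : ℕ) :
    ∑ _w : Fin n → Fin 3, (ENNReal.ofReal (gold * ρ ^ n)) ^ s
      = ENNReal.ofReal (gold ^ s) := by
  rw [Finset.sum_const, Finset.card_univ, Fintype.card_fun, Fintype.card_fin, Fintype.card_fin]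
  rw [ENNReal.ofReal_rpow_of_nonneg (mul_nonneg gold_nonneg (pow_nonneg ρ_nonneg n)) s_nonneg]
  rw [Real.mul_rpow gold_nonneg (pow_nonneg ρ_nonneg n), rho_pow_rpow]
  rw [ENNReal.ofReal_mul (Real.rpow_nonneg gold_nonneg s)]
  rw [ENNReal.ofReal_pow (by norm_num)]
  rw [nsmul_eq_mul]
  push_cast
  calc (3:ℝ≥0∞) ^ n * (ENNReal.ofReal (gold ^ s) * ENNReal.ofReal (3:ℝ)⁻¹ ^ n)
      = ENNReal.ofReal (gold ^ s) * ((3:ℝ≥0∞) * ENNReal.ofReal (3:ℝ)⁻¹) ^ n := by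
        rw [mul_pow]; ring
    _ = ENNReal.ofReal (gold ^ s) := by rw [ofReal3_inv, one_pow, mul_one]

lemma hausdorff_C_le : μH[s] cantorC ≤ ENNReal.ofReal (gold ^ s) := by
  have hr : Tendsto (fun n : ℕ => ENNReal.ofReal (gold * ρ ^ n)) atTop (nhds 0) := by
    rw [show (0:ℝ≥0∞) = ENNReal.ofReal 0 by simp]
    apply ENNReal.tendsto_ofReal
    have := (tendsto_pow_atTop_nhds_zero_of_lt_one ρ_nonneg ρ_lt_one).const_mul gold
    simpa using this
  have hle := Measure.hausdorffMeasure_le_liminf_sum s cantorC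
    (fun n : ℕ => ENNReal.ofReal (gold * ρ ^ n))
    hr
    (fun n (w : Fin n → Fin 3) => Icc (P n w) (P n w + gold * ρ ^ n))
    (Filter.Eventually.of_forall (fun n => fun w => by
      rw [Real.ediam_Icc]
      simp))
    (Filter.Eventually.of_forall cover_step)
  apply le_trans hle
  have hdiam : ∀ n : ℕ, ∀ w : Fin n → Fin 3,
      Metric.ediam (Icc (P n w) (P n w + gold * ρ ^ n)) = ENNReal.ofReal (gold * ρ ^ n) := by
    intro n w
    rw [Real.ediam_Icc]
    simp
  have heq : ∀ n : ℕ, (∑ w : Fin n → Fin 3,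
      Metric.ediam (Icc (P n w) (P n w + gold * ρ ^ n)) ^ s) = ENNReal.ofReal (gold ^ s) := by
    intro n
    rw [Finset.sum_congr rfl (fun w _ => by rw [hdiam n w])]
    exact sum_cover n
  rw [liminf_congr (Filter.Eventually.of_forall heq)]
  rw [liminf_const]

lemma dimH_C_le : dimH cantorC ≤ ENNReal.ofReal s := by
  have h : μH[((s.toNNReal : ℝ≥0) : ℝ)] cantorC ≠ ⊤ := by
    rw [Real.coe_toNNReal _ s_nonneg]
    exact ne_top_of_le_ne_top ENNReal.ofReal_ne_top hausdorff_C_le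
  exact dimH_le_of_hausdorffMeasure_ne_top h

lemma G_holderOnWith : HolderOnWith Kc.toNNReal s.toNNReal G cantorCsharp := by
  intro x hx y hy
  rw [edist_dist, edist_dist]
  rw [Real.coe_toNNReal _ s_nonneg]
  rw [ENNReal.ofReal_rpow_of_nonneg dist_nonneg s_nonneg]
  rw [show ((Kc.toNNReal : ℝ≥0) : ℝ≥0∞) = ENNReal.ofReal Kc from rfl]
  rw [← ENNReal.ofReal_mul Kc_pos.le]
  apply ENNReal.ofReal_le_ofReal
  rw [Real.dist_eq, Real.dist_eq]
  exact G_holder hx.1 hy.1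

lemma dimH_image_sharp : dimH (G '' cantorCsharp) = 1 := by
  have hsplitC : cantorC = cantorCsharp ∪ (cantorC ∩ cantorEndpoints) := by
    unfold cantorCsharp
    ext z
    simp only [mem_union, mem_diff, mem_inter_iff]
    tauto
  have himg : G '' cantorCsharp ∪ G '' (cantorC ∩ cantorEndpoints) = Icc 0 1 := by
    rw [← image_union, ← hsplitC, G_image]
  have h1 : dimH (Icc (0:ℝ) 1) = 1 := by
    have := Real.dimH_of_nonempty_interior (E := ℝ)
      (s := Icc (0: ℝ) 1) (by rw [interior_Icc]; exact ⟨1/2, by norm_num, by norm_num⟩)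
    rw [this]
    simp
  have h0 : dimH (G '' (cantorC ∩ cantorEndpoints)) = 0 :=
    dimH_countable (endpoints_countable.image G)
  have := dimH_union (G '' cantorCsharp) (G '' (cantorC ∩ cantorEndpoints))
  rw [himg, h1, h0] at this
  simpa using this.symm

lemma snn_ne : (s.toNNReal : ℝ≥0) ≠ 0 := by
  simp only [ne_eq, Real.toNNReal_eq_zero, not_le]
  exact s_pos

lemma dimH_sharp_ge : ENNReal.ofReal s ≤ dimH cantorCsharp := by
  have h := G_holderOnWith.dimH_image_le (Real.toNNReal_pos.2 s_pos)
  rw [dimH_image_sharp] at h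
  have h2 : (1 : ℝ≥0∞) * (s.toNNReal : ℝ≥0∞) ≤ dimH cantorCsharp := by
    rw [← ENNReal.le_div_iff_mul_le (Or.inl (by exact_mod_cast snn_ne))
      (Or.inl ENNReal.coe_ne_top)]
    exact h
  rw [one_mul] at h2
  exact h2

lemma dimH_sharp : dimH cantorCsharp = ENNReal.ofReal s :=
  le_antisymm (le_trans (dimH_mono diff_subset) dimH_C_le) dimH_sharp_ge

end GC6

namespace GC7
open GC GC2 GC3 GC4 GC5 GC6
open scoped ENNReal NNReal

def sgn (b : Bool) : ℝ := if b then 1 else -1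

def A (q : ℤ × ℤ × ℤ × Bool) : Set ℝ :=
  (fun c => sgn q.2.2.2 * gold ^ ((3:ℤ) * q.1) * c
    + (2 * q.2.1 + 2 * q.2.2.1 * gold)) '' cantorCsharp

lemma Y_eq : {y : ℝ | ∃ c ∈ cantorCsharp, ∃ k : ℤ, ∃ ε : ℝ, (ε = 1 ∨ ε = -1) ∧
      y - ε * gold ^ ((3 : ℤ) * k) * c ∈ twoZgold} = ⋃ q, A q := by
  ext y
  simp only [mem_setOf_eq, mem_iUnion, twoZgold, A, sgn, mem_image]
  constructor
  · rintro ⟨c, hc, k, ε, hε, m, n, hmn⟩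
    rcases hε with rfl | rfl
    · exact ⟨(k, m, n, true), c, hc, by simp; linarith⟩
    · exact ⟨(k, m, n, false), c, hc, by simp; linarith⟩
  · rintro ⟨⟨k, m, n, b⟩, c, hc, rfl⟩
    refine ⟨c, hc, k, if b then 1 else -1, ?_, m, n, by cases b <;> simp <;> ring⟩
    cases b <;> simp

lemma affine_lip (a t : ℝ) : LipschitzWith (Real.nnabs a) (fun x : ℝ => a * x + t) := by
  apply LipschitzWith.of_dist_le_mul
  intro x y
  rw [Real.dist_eq, Real.dist_eq]
  have h : a * x + t - (a * y + t) = a * (x - y) := by ring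
  rw [h, abs_mul, Real.coe_nnabs]

lemma affine_dimH {a : ℝ} (t : ℝ) (ha : a ≠ 0) (S : Set ℝ) :
    dimH ((fun x => a * x + t) '' S) = dimH S := by
  apply le_antisymm ((affine_lip a t).dimH_image_le S)
  have h2 := (affine_lip a⁻¹ (-(a⁻¹ * t))).dimH_image_le ((fun x => a * x + t) '' S)
  have him : (fun y => a⁻¹ * y + -(a⁻¹ * t)) '' ((fun x => a * x + t) '' S) = S := by
    rw [image_image]
    have h3 : (fun x : ℝ => a⁻¹ * (a * x + t) + -(a⁻¹ * t)) = fun x => x := by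
      funext x; field_simp; ring
    rw [h3, image_id']
  rwa [him] at h2

lemma sgn_ne (b : Bool) : sgn b ≠ 0 := by cases b <;> simp [sgn]

lemma dimH_A (q : ℤ × ℤ × ℤ × Bool) : dimH (A q) = ENNReal.ofReal s := by
  unfold A
  rw [affine_dimH _ (mul_ne_zero (sgn_ne _) (zpow_ne_zero _ GC.gold_pos.ne')), dimH_sharp]

lemma dimH_Y : dimH {y : ℝ | ∃ c ∈ cantorCsharp, ∃ k : ℤ, ∃ ε : ℝ, (ε = 1 ∨ ε = -1) ∧
      y - ε * gold ^ ((3 : ℤ) * k) * c ∈ twoZgold} = ENNReal.ofReal s := by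
  rw [Y_eq, dimH_iUnion]
  simp only [dimH_A]
  exact iSup_const

/-- `2ℤ[φ]` as an additive subgroup -/
def Ssub : AddSubgroup ℝ where
  carrier := twoZgold
  add_mem' := by
    rintro x y ⟨m, n, rfl⟩ ⟨m', n', rfl⟩
    exact ⟨m + m', n + n', by push_cast; ring⟩
  zero_mem' := ⟨0, 0, by norm_num⟩
  neg_mem' := by
    rintro x ⟨m, n, rfl⟩
    exact ⟨-m, -n, by push_cast; ring⟩

lemma gold_irrational : Irrational gold := by
  rintro ⟨r, hr⟩
  have h5 : Irrational (Real.sqrt 5) := by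
    have := (by norm_num : Nat.Prime 5).irrational_sqrt
    simpa using this
  apply h5
  refine ⟨2 * r - 1, ?_⟩
  have hg : gold = (1 + Real.sqrt 5) / 2 := rfl
  push_cast
  rw [hr, hg]
  ring

lemma dense_twoZgold : Dense twoZgold := by
  rcases Ssub.dense_or_cyclic with h | ⟨a, ha⟩
  · exact h
  · exfalso
    have h2 : (2:ℝ) ∈ Ssub := ⟨1, 0, by norm_num⟩
    have h2g : (2:ℝ) * gold ∈ Ssub := ⟨0, 1, by norm_num⟩
    rw [ha, AddSubgroup.mem_closure_singleton] at h2 h2g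
    obtain ⟨p, hp⟩ := h2
    obtain ⟨q, hq⟩ := h2g
    rw [zsmul_eq_mul] at hp hq
    have hp0 : (p:ℝ) ≠ 0 := by
      intro h
      rw [h, zero_mul] at hp
      norm_num at hp
    have ha0 : a ≠ 0 := by
      intro h
      rw [h, mul_zero] at hp
      norm_num at hp
    have hgold : gold = (q:ℝ) / (p:ℝ) := by
      have hkey : ((q:ℝ) - gold * p) * a = 0 := by linear_combination hq - gold * hp
      rcases mul_eq_zero.1 hkey with h | h
      · field_simp
        linarith [sub_eq_zero.1 h]
      · exact absurd h ha0
    exact gold_irrational ⟨(q:ℚ) / (p:ℚ), by push_cast; rw [hgold]⟩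

lemma dense_Y : Dense {y : ℝ | ∃ c ∈ cantorCsharp, ∃ k : ℤ, ∃ ε : ℝ, (ε = 1 ∨ ε = -1) ∧
      y - ε * gold ^ ((3 : ℤ) * k) * c ∈ twoZgold} := by
  apply Dense.mono (s₁ := (fun z => c0 + z) '' twoZgold)
  · rintro y ⟨z, hz, rfl⟩
    refine ⟨c0, c0_sharp, 0, 1, Or.inl rfl, ?_⟩
    have : c0 + z - 1 * gold ^ ((3:ℤ) * 0) * c0 = z := by
      norm_num
    rwa [this]
  · have hco : (fun z : ℝ => c0 + z) = ⇑(Homeomorph.addLeft c0) := rfl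
    rw [hco]
    exact ((Homeomorph.addLeft c0).surjective.denseRange).dense_image
      (Homeomorph.addLeft c0).continuous dense_twoZgold

end GC7


/-- The set of heights equivalent to a point of `C♯` is dense and has Hausdorff
dimension `log 3 / log φ³`. -/
theorem dense_and_dimension_of_equivalent_heights :
    Dense {y : ℝ | ∃ c ∈ cantorCsharp, ∃ k : ℤ, ∃ ε : ℝ, (ε = 1 ∨ ε = -1) ∧
      y - ε * gold ^ ((3 : ℤ) * k) * c ∈ twoZgold} ∧
    dimH {y : ℝ | ∃ c ∈ cantorCsharp, ∃ k : ℤ, ∃ ε : ℝ, (ε = 1 ∨ ε = -1) ∧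
      y - ε * gold ^ ((3 : ℤ) * k) * c ∈ twoZgold} =
      ENNReal.ofReal (Real.log 3 / Real.log (gold ^ 3)) :=
  ⟨GC7.dense_Y, GC7.dimH_Y⟩
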